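/- arXiv:2008.11197 — 2 statements merged into one kernel-verified Lean document; each statement's English description precedes it below -/
import Mathlib

section
/- Let G = (V, E) be a connected, locally finite graph, let k ≥ 1, and let A be a finite subset of V with |A| ≥ 3^k. Then there exist m ≥ 3^{k-1} + 1 and disjoint nonempty sets E₁, …, E_m ⊆ E such that: (1) each Eᵢ spans a connected subgraph of G; (2) every vertex of V is incident to some edge in ⋃ᵢ Eᵢ; (3) the set Vᵢ of vertices incident to an edge of Eᵢ satisfies 3^{-k}|A| ≤ |A ∩ Vᵢ| < 3^{-k+1}|A| for each 1 ≤ i ≤ m. -/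
open SimpleGraph

/-- A set of edges spans a connected subgraph: the graph whose edges are exactly the
given edges, induced on the set of vertices incident to one of these edges, is connected. -/
def SpansConnected {V : Type*} (s : Set (Sym2 V)) : Prop :=
  (SimpleGraph.induce {v : V | ∃ e ∈ s, v ∈ e} (SimpleGraph.fromEdgeSet s)).Connected

set_option linter.unusedSectionVars false
set_option linter.unusedVariables false
set_option maxHeartbeats 1000000




section Chains
variable {V : Type*} {p : V → V} {r : V} {d : V → ℕ}
variable (hpr : p r = r) (hd : ∀ v, v ≠ r → d (p v) < d v)

include hpr in
lemma iter_r_absorb (n : ℕ) : p^[n] r = r := by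
  induction n with
  | zero => rfl
  | succ n ih => rw [Function.iterate_succ_apply, hpr, ih]

include hpr in
lemma iter_absorb {v : V} {m n : ℕ} (hmn : m ≤ n) (h : p^[m] v = r) : p^[n] v = r := by
  obtain ⟨k, rfl⟩ := Nat.exists_eq_add_of_le hmn
  rw [Nat.add_comm, Function.iterate_add_apply, h, iter_r_absorb hpr]

include hd in
lemma chain_reach : ∀ N v, d v ≤ N → ∃ n, p^[n] v = r := by
  intro N
  induction N with
  | zero =>
    intro v hv
    by_cases h : v = r
    · exact ⟨0, h⟩
    · exact absurd (hd v h) (by omega)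
  | succ N ih =>
    intro v hv
    by_cases h : v = r
    · exact ⟨0, h⟩
    · obtain ⟨n, hn⟩ := ih (p v) (by have := hd v h; omega)
      exact ⟨n + 1, by rwa [Function.iterate_succ_apply]⟩

include hd in
lemma reaches_r (v : V) : ∃ n, p^[n] v = r := chain_reach hd (d v) v le_rfl

include hpr hd in
lemma d_iter_le (h0 : d r = 0) (v : V) (n : ℕ) : d (p^[n] v) ≤ d v := by
  induction n with
  | zero => exact le_rfl
  | succ n ih =>
    rw [Function.iterate_succ_apply']
    by_cases h : p^[n] v = r
    · rw [h, hpr, h0]; omega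
    · have := hd _ h; omega

include hpr hd in
lemma d_le_of_chain {u : V} (hu : u ≠ r) :
    ∀ n (x : V), p^[n] x = u → d u ≤ d x := by
  intro n
  induction n with
  | zero =>
    intro x hx
    simp only [Function.iterate_zero_apply] at hx
    rw [← hx]
  | succ n ih =>
    intro x hx
    rw [Function.iterate_succ_apply] at hx
    by_cases h : x = r
    · exfalso; apply hu; rw [← hx, h, hpr, iter_r_absorb hpr]
    · have h1 := ih (p x) hx
      have h2 := hd x h
      omega

include hd in
lemma exit_lemma {D : Set V} {t : V} (hcl : ∀ v ∈ D, p v ∈ D ∨ p v = t)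
    (hrD : r ∉ D) (hne : D.Nonempty) : ∃ v ∈ D, p v = t := by
  obtain ⟨v₀, hv₀⟩ := hne
  obtain ⟨N, hN⟩ := reaches_r hd v₀
  have hex : ∃ n, p^[n] v₀ ∉ D := ⟨N, by rwa [hN]⟩
  classical
  let n := Nat.find hex
  have hn : p^[n] v₀ ∉ D := Nat.find_spec hex
  have hnpos : n ≠ 0 := by
    intro h
    apply hn
    rw [h] at hn ⊢
    exact hv₀
  have hprev : p^[n-1] v₀ ∈ D := by
    by_contra h
    exact absurd (Nat.find_min' hex h) (by omega)
  refine ⟨p^[n-1] v₀, hprev, ?_⟩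
  rcases hcl _ hprev with h | h
  · exfalso; apply hn
    have : p (p^[n-1] v₀) = p^[n] v₀ := by
      conv_rhs => rw [show n = (n-1)+1 by omega, Function.iterate_succ_apply']
    rwa [this] at h
  · exact h

end Chains

lemma greedy_subset {V : Type*} [DecidableEq V] (c : ℝ) (hc : 0 < c) (f : V → ℕ) :
    ∀ N (F : Finset V), F.card ≤ N → (∀ u ∈ F, (f u : ℝ) < c) →
    c ≤ (∑ u ∈ F, (f u : ℝ)) →
    ∃ g ⊆ F, c ≤ (∑ u ∈ g, (f u : ℝ)) ∧ (∑ u ∈ g, (f u : ℝ)) < 2 * c := by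
  intro N
  induction N with
  | zero =>
    intro F hF hsmall hsum
    refine ⟨F, le_rfl, hsum, ?_⟩
    have : F = ∅ := Finset.card_eq_zero.mp (by omega)
    subst this
    simp at hsum
    linarith
  | succ N ih =>
    intro F hF hsmall hsum
    by_cases h : (∑ u ∈ F, (f u : ℝ)) < 2 * c
    · exact ⟨F, le_rfl, hsum, h⟩
    · push_neg at h
      have hFne : F.Nonempty := by
        rcases Finset.eq_empty_or_nonempty F with rfl | h'
        · simp at h; linarith
        · exact h'
      obtain ⟨u, hu⟩ := hFne
      have hsum' : c ≤ ∑ v ∈ F.erase u, (f v : ℝ) := by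
        have := Finset.sum_erase_add F (fun v => (f v : ℝ)) hu
        have hfu := hsmall u hu
        linarith [this]
      obtain ⟨g, hg, h1, h2⟩ := ih (F.erase u)
        (by have := Finset.card_erase_of_mem hu; omega)
        (fun v hv => hsmall v (Finset.mem_of_mem_erase hv)) hsum'
      exact ⟨g, hg.trans (Finset.erase_subset u F), h1, h2⟩

section Peel
variable {V : Type*} [DecidableEq V] {p : V → V} {r : V} {d : V → ℕ}
variable (hpr : p r = r) (hd : ∀ v, v ≠ r → d (p v) < d v) (h0 : d r = 0)

include hpr hd h0 in
lemma peel (A : Finset V) (c : ℝ) (hc : 1 ≤ c) :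
    ∀ N (S : Finset V), S.card ≤ N → S.Nonempty → r ∉ S →
    (∀ v ∈ S, p v ∈ S ∨ p v = r) →
    c ≤ ((A ∩ insert r S).card : ℝ) →
    ∃ P : List (Finset V × V),
      (∀ q ∈ P, q.1.Nonempty ∧ q.1 ⊆ S ∧ (∀ v ∈ q.1, p v ∈ q.1 ∨ p v = q.2) ∧
        c ≤ ((A ∩ insert q.2 q.1).card : ℝ) ∧ ((A ∩ insert q.2 q.1).card : ℝ) < 3 * c) ∧
      (∀ v ∈ S, ∃ q ∈ P, v ∈ q.1) ∧
      P.Pairwise (fun q q' => Disjoint q.1 q'.1) := by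
  classical
  intro N
  induction N with
  | zero =>
    intro S hcard hne
    exact absurd (Finset.card_pos.mpr hne) (by omega)
  | succ N ih =>
    intro S hcard hne hrS hS hW
    set W : ℕ := (A ∩ insert r S).card with hWdef
    by_cases hbase : (W : ℝ) < 3 * c
    -- base case: single part
    · refine ⟨[(S, r)], ?_, ?_, ?_⟩
      · rintro q hq
        simp only [List.mem_singleton] at hq
        subst hq
        refine ⟨hne, le_rfl, hS, ?_, ?_⟩
        · simpa using hW
        · simpa using hbase
      · intro v hv
        exact ⟨(S, r), by simp, hv⟩
      · simp
    · push_neg at hbase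
      -- descendant sets
      set Desc : V → Finset V :=
        fun v => insert v (S.filter (fun u => ∃ n, p^[n] u = v)) with hDesc
      have hDesc_self : ∀ v, v ∈ Desc v := fun v => Finset.mem_insert_self v _
      have hDesc_sub : ∀ v ∈ S, Desc v ⊆ S := by
        intro v hv x hx
        rcases Finset.mem_insert.mp hx with rfl | hx
        · exact hv
        · exact (Finset.mem_filter.mp hx).1
      have hDesc_mem : ∀ {v x : V}, x ∈ Desc v ↔ x = v ∨ (x ∈ S ∧ ∃ n, p^[n] x = v) := by
        intro v x
        simp [hDesc, Finset.mem_insert, Finset.mem_filter]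
      have hDesc_chain : ∀ {v x : V}, x ∈ Desc v → ∃ n, p^[n] x = v := by
        intro v x hx
        rcases hDesc_mem.mp hx with rfl | ⟨-, h⟩
        · exact ⟨0, rfl⟩
        · exact h
      -- closure of Desc
      have hDesc_cl : ∀ (v : V), ∀ u ∈ Desc v, p u ∈ Desc v ∨ p u = p v := by
        intro v u hu
        rcases hDesc_mem.mp hu with rfl | ⟨huS, n, hn⟩
        · exact Or.inr rfl
        · have hn0 : n ≠ 0 ∨ u = v := by
            rcases Nat.eq_zero_or_pos n with h | h
            · right; rw [← hn, h]; rfl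
            · left; omega
          rcases hn0 with hn0 | rfl
          · rcases hS u huS with h | h
            · left
              refine hDesc_mem.mpr (Or.inr ⟨h, n - 1, ?_⟩)
              rw [show n = (n-1)+1 by omega, Function.iterate_succ_apply] at hn
              exact hn
            · left
              have : v = r := by
                rw [show n = (n-1)+1 by omega, Function.iterate_succ_apply, h,
                  iter_r_absorb hpr] at hn
                exact hn.symm
              rw [h, this]
              exact hDesc_self r
          · exact Or.inr rfl
      -- descendant-closedness
      have hDesc_dc : ∀ {v u : V}, u ∈ S → p u ∈ Desc v → u ∈ Desc v := by
        intro v u huS hpu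
        obtain ⟨n, hn⟩ := hDesc_chain hpu
        exact hDesc_mem.mpr (Or.inr ⟨huS, n + 1, by rwa [Function.iterate_succ_apply]⟩)
      have hr_not_Desc : ∀ {v : V}, v ∈ S → r ∉ Desc v := by
        intro v hv hr
        rcases hDesc_mem.mp hr with rfl | ⟨hrS', -⟩
        · exact hrS hv
        · exact hrS hrS'
      -- children
      set child : V → Finset V := fun v => S.filter (fun u => p u = v) with hchild
      have hchild_mem : ∀ {v u : V}, u ∈ child v ↔ u ∈ S ∧ p u = v := by
        intro v u; simp [hchild]
      have hchild_d : ∀ {v u : V}, u ∈ child v → d v < d u := by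
        intro v u hu
        obtain ⟨huS, hpu⟩ := hchild_mem.mp hu
        have hur : u ≠ r := fun h => hrS (h ▸ huS)
        have := hd u hur
        rw [hpu] at this; omega
      have hv_not_descchild : ∀ {v u : V}, u ∈ child v → v ∉ Desc u := by
        intro v u hu hv
        have h1 := hchild_d hu
        obtain ⟨n, hn⟩ := hDesc_chain hv
        have hur : u ≠ r := fun h => hrS (h ▸ (hchild_mem.mp hu).1)
        have := d_le_of_chain hpr hd hur n v hn
        omega
      have hdisj_aux : ∀ {v u₁ u₂ x : V} {n₁ n₂ : ℕ}, u₁ ∈ child v → u₂ ∈ child v →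
          n₁ < n₂ → p^[n₁] x = u₁ → p^[n₂] x = u₂ → False := by
        intro v u₁ u₂ x n₁ n₂ h1 h2 hlt e1 e2
        have e3 : p^[n₂ - n₁] u₁ = u₂ := by
          rw [← e1, ← Function.iterate_add_apply]
          rw [show n₂ - n₁ + n₁ = n₂ by omega]
          exact e2
        have e4 : p^[n₂ - n₁ - 1] v = u₂ := by
          rw [show n₂ - n₁ = (n₂ - n₁ - 1) + 1 by omega, Function.iterate_succ_apply,
            (hchild_mem.mp h1).2] at e3
          exact e3
        have h5 : d u₂ ≤ d v := by
          rw [← e4]; exact d_iter_le hpr hd h0 v _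
        have := hchild_d h2
        omega
      have hDesc_disj : ∀ {v u₁ u₂ : V}, u₁ ∈ child v → u₂ ∈ child v → u₁ ≠ u₂ →
          ∀ x ∈ Desc u₁, x ∉ Desc u₂ := by
        intro v u₁ u₂ h1 h2 hne12 x hx1 hx2
        obtain ⟨n₁, e1⟩ := hDesc_chain hx1
        obtain ⟨n₂, e2⟩ := hDesc_chain hx2
        rcases Nat.lt_trichotomy n₁ n₂ with h | h | h
        · exact hdisj_aux h1 h2 h e1 e2
        · exact hne12 (by rw [← e1, ← e2, h])
        · exact hdisj_aux h2 h1 h e2 e1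
      have hDesc_decomp : ∀ {v x : V}, x ∈ Desc v → x ≠ v → ∃ u ∈ child v, x ∈ Desc u := by
        intro v x hx hxv
        rcases hDesc_mem.mp hx with rfl | ⟨hxS, hex⟩
        · exact absurd rfl hxv
        · have hn := Nat.find_spec hex
          set n := Nat.find hex with hndef
          have hn0 : n ≠ 0 := by
            intro h; rw [h] at hn; exact hxv hn
          have hstay : ∀ m, m < n → p^[m] x ∈ S := by
            intro m
            induction m with
            | zero => intro _; simpa using hxS
            | succ k ihk =>
              intro hk
              have hkS : p^[k] x ∈ S := ihk (by omega)
              rcases hS _ hkS with h | h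
              · rw [Function.iterate_succ_apply']; exact h
              · exfalso
                have hk1 : p^[k+1] x = r := by rw [Function.iterate_succ_apply', h]
                have habs : p^[n] x = r := iter_absorb hpr (by omega) hk1
                have hvr : v = r := by rw [← hn, habs]
                exact absurd (Nat.find_min' hex (show p^[k+1] x = v by rw [hk1, hvr]))
                  (by omega)
          refine ⟨p^[n-1] x, hchild_mem.mpr ⟨hstay _ (by omega), ?_⟩, ?_⟩
          · have h9 : p^[(n-1)+1] x = p (p^[n-1] x) := Function.iterate_succ_apply' p (n-1) x
            rw [show (n-1)+1 = n by omega] at h9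
            rw [← h9]
            exact hn
          · exact hDesc_mem.mpr (Or.inr ⟨hxS, n - 1, rfl⟩)
      -- weights
      set τ : V → ℕ := fun v => (A ∩ Desc v).card with hτ
      have hE2 : ∀ {v : V} (g : Finset V), g ⊆ child v →
          (A ∩ g.biUnion Desc).card = ∑ u ∈ g, τ u := by
        intro v g hg
        have heq : A ∩ g.biUnion Desc = g.biUnion (fun u => A ∩ Desc u) := by
          ext x
          simp only [Finset.mem_inter, Finset.mem_biUnion]
          tauto
        rw [heq]
        exact Finset.card_biUnion (fun u₁ h1 u₂ h2 hne12 => by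
          simp only [Function.onFun, Finset.disjoint_left]
          intro a ha1 ha2
          exact hDesc_disj (hg h1) (hg h2) hne12 a (Finset.mem_inter.mp ha1).2
            (Finset.mem_inter.mp ha2).2)
      have hE1 : ∀ {v : V}, τ v ≤ 1 + ∑ u ∈ child v, τ u := by
        intro v
        have hsub : A ∩ Desc v ⊆ insert v (A ∩ (child v).biUnion Desc) := by
          intro x hx
          obtain ⟨hxA, hxD⟩ := Finset.mem_inter.mp hx
          by_cases hxv : x = v
          · exact Finset.mem_insert.mpr (Or.inl hxv)
          · obtain ⟨u, hu, hxu⟩ := hDesc_decomp hxD hxv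
            exact Finset.mem_insert.mpr (Or.inr (Finset.mem_inter.mpr
              ⟨hxA, Finset.mem_biUnion.mpr ⟨u, hu, hxu⟩⟩))
        calc τ v ≤ (insert v (A ∩ (child v).biUnion Desc)).card := Finset.card_le_card hsub
        _ ≤ (A ∩ (child v).biUnion Desc).card + 1 := Finset.card_insert_le _ _
        _ = 1 + ∑ u ∈ child v, τ u := by rw [hE2 (child v) le_rfl]; omega
      -- generic bounds for inserting a top vertex
      have hins_lb : ∀ (t : V) (X : Finset V), (A ∩ X).card ≤ (A ∩ insert t X).card := by
        intro t X
        apply Finset.card_le_card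
        intro x hx
        obtain ⟨h1, h2⟩ := Finset.mem_inter.mp hx
        exact Finset.mem_inter.mpr ⟨h1, Finset.mem_insert_of_mem h2⟩
      have hins_ub : ∀ (t : V) (X : Finset V), (A ∩ insert t X).card ≤ 1 + (A ∩ X).card := by
        intro t X
        have hsub : A ∩ insert t X ⊆ insert t (A ∩ X) := by
          intro x hx
          obtain ⟨h1, h2⟩ := Finset.mem_inter.mp hx
          rcases Finset.mem_insert.mp h2 with rfl | h2
          · exact Finset.mem_insert_self _ _
          · exact Finset.mem_insert_of_mem (Finset.mem_inter.mpr ⟨h1, h2⟩)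
        calc (A ∩ insert t X).card ≤ (insert t (A ∩ X)).card := Finset.card_le_card hsub
        _ ≤ (A ∩ X).card + 1 := Finset.card_insert_le _ _
        _ = 1 + (A ∩ X).card := by omega
      -- splitting off a subset
      have key_split : ∀ (X : Finset V), X ⊆ S →
          (A ∩ insert r S).card = (A ∩ insert r (S \ X)).card + (A ∩ X).card := by
        intro X hX
        have hun : insert r (S \ X) ∪ X = insert r S := by
          ext x
          simp only [Finset.mem_union, Finset.mem_insert, Finset.mem_sdiff]
          constructor
          · rintro ((rfl | ⟨hxS, -⟩) | hx)
            · exact Or.inl rfl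
            · exact Or.inr hxS
            · exact Or.inr (hX hx)
          · rintro (rfl | hxS)
            · exact Or.inl (Or.inl rfl)
            · by_cases hx : x ∈ X
              · exact Or.inr hx
              · exact Or.inl (Or.inr ⟨hxS, hx⟩)
        have hdis : Disjoint (insert r (S \ X)) X := by
          rw [Finset.disjoint_left]
          rintro x hx hxX
          rcases Finset.mem_insert.mp hx with rfl | hx'
          · exact hrS (hX hxX)
          · exact (Finset.mem_sdiff.mp hx').2 hxX
        rw [← hun, Finset.inter_union_distrib_left,
          Finset.card_union_of_disjoint (hdis.mono Finset.inter_subset_right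
            Finset.inter_subset_right)]
      -- select v of maximal depth with heavy descendant set
      have hDescr : A ∩ insert r S ⊆ A ∩ Desc r := by
        intro x hx
        obtain ⟨hxA, hxS⟩ := Finset.mem_inter.mp hx
        refine Finset.mem_inter.mpr ⟨hxA, ?_⟩
        rcases Finset.mem_insert.mp hxS with rfl | hxS'
        · exact hDesc_self x
        · exact hDesc_mem.mpr (Or.inr ⟨hxS', reaches_r hd x⟩)
      have hτr : (W : ℝ) ≤ (τ r : ℝ) := by
        exact_mod_cast Finset.card_le_card hDescr
      set T : Finset V := (insert r S).filter (fun v => c ≤ (τ v : ℝ)) with hT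
      have hrT : r ∈ T := Finset.mem_filter.mpr ⟨Finset.mem_insert_self _ _, by linarith⟩
      obtain ⟨v, hvT, hvmax⟩ := T.exists_max_image d ⟨r, hrT⟩
      have hvS : v ∈ insert r S := (Finset.mem_filter.mp hvT).1
      have hτv : c ≤ (τ v : ℝ) := (Finset.mem_filter.mp hvT).2
      have hchild_small : ∀ u ∈ child v, (τ u : ℝ) < c := by
        intro u hu
        by_contra hge
        push_neg at hge
        have huS : u ∈ S := (hchild_mem.mp hu).1
        have huT : u ∈ T := Finset.mem_filter.mpr ⟨Finset.mem_insert_of_mem huS, hge⟩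
        have h1 := hvmax u huT
        have h2 := hchild_d hu
        omega
      by_cases hcase : v ≠ r ∧ (τ v : ℝ) < 2 * c
      -- Case (i): cut whole descendant set of v
      · obtain ⟨hvr, hτv2⟩ := hcase
        have hvS' : v ∈ S := (Finset.mem_insert.mp hvS).resolve_left hvr
        set S' : Finset V := S \ Desc v with hS'def
        have hkey := key_split (Desc v) (hDesc_sub v hvS')
        have hWS' : c < ((A ∩ insert r S').card : ℝ) := by
          have hcast : ((A ∩ insert r S').card : ℝ) = (W : ℝ) - (τ v : ℝ) := by
            rw [hWdef, hkey]; push_cast; ring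
          rw [hcast]; linarith
        have hS'ne : S'.Nonempty := by
          have h2 : 1 < (A ∩ insert r S').card := by
            by_contra hle
            push_neg at hle
            have : ((A ∩ insert r S').card : ℝ) ≤ 1 := by exact_mod_cast hle
            linarith
          obtain ⟨x, hx, hxr⟩ := Finset.exists_mem_ne h2 r
          have := (Finset.mem_inter.mp hx).2
          exact ⟨x, (Finset.mem_insert.mp this).resolve_left hxr⟩
        have hS'r : r ∉ S' := fun h => hrS (Finset.mem_sdiff.mp h).1
        have hS'cl : ∀ u ∈ S', p u ∈ S' ∨ p u = r := by
          intro u hu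
          obtain ⟨huS, huD⟩ := Finset.mem_sdiff.mp hu
          rcases hS u huS with h | h
          · exact Or.inl (Finset.mem_sdiff.mpr ⟨h, fun hpd => huD (hDesc_dc huS hpd)⟩)
          · exact Or.inr h
        have hS'card : S'.card ≤ N := by
          have hss : S' ⊂ S := Finset.sdiff_ssubset (hDesc_sub v hvS') ⟨v, hDesc_self v⟩
          have := Finset.card_lt_card hss
          omega
        obtain ⟨P', hP'props, hP'cov, hP'disj⟩ := ih S' hS'card hS'ne hS'r hS'cl (le_of_lt hWS')
        refine ⟨(Desc v, p v) :: P', ?_, ?_, ?_⟩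
        · rintro q hq
          rcases List.mem_cons.mp hq with rfl | hq'
          · refine ⟨⟨v, hDesc_self v⟩, hDesc_sub v hvS', hDesc_cl v, ?_, ?_⟩
            · have h1 := hins_lb (p v) (Desc v)
              have h2 : (τ v : ℝ) ≤ ((A ∩ insert (p v) (Desc v)).card : ℝ) := by
                exact_mod_cast h1
              linarith
            · have h1 := hins_ub (p v) (Desc v)
              have h2 : ((A ∩ insert (p v) (Desc v)).card : ℝ) ≤ 1 + (τ v : ℝ) := by
                exact_mod_cast h1
              linarith
          · obtain ⟨ha, hb, hc', hd', he⟩ := hP'props q hq'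
            exact ⟨ha, hb.trans (Finset.sdiff_subset), hc', hd', he⟩
        · intro u hu
          by_cases hx : u ∈ Desc v
          · exact ⟨(Desc v, p v), List.mem_cons_self, hx⟩
          · obtain ⟨q, hq, hq2⟩ := hP'cov u (Finset.mem_sdiff.mpr ⟨hu, hx⟩)
            exact ⟨q, List.mem_cons_of_mem _ hq, hq2⟩
        · refine List.pairwise_cons.mpr ⟨?_, hP'disj⟩
          intro q hq
          have hqsub := (hP'props q hq).2.1
          rw [Finset.disjoint_left]
          intro x hx hxq
          exact (Finset.mem_sdiff.mp (hqsub hxq)).2 hx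
      -- Case (ii): bundle some children subtrees at v
      · have hτv2 : 2 * c ≤ (τ v : ℝ) := by
          by_cases hvr : v = r
          · subst hvr; linarith
          · by_contra hlt
            push_neg at hlt
            exact hcase ⟨hvr, hlt⟩
        have hsumc : c ≤ ∑ u ∈ child v, (τ u : ℝ) := by
          have h1 : (τ v : ℝ) ≤ 1 + ∑ u ∈ child v, (τ u : ℝ) := by
            have := hE1 (v := v)
            push_cast
            exact_mod_cast this
          linarith
        obtain ⟨g, hg, hg1, hg2⟩ := greedy_subset c (by linarith) τ (child v).card (child v)
          le_rfl hchild_small hsumc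
        set D₁ : Finset V := g.biUnion Desc with hD₁def
        have hgne : g.Nonempty := by
          rcases Finset.eq_empty_or_nonempty g with rfl | h
          · simp at hg1; linarith
          · exact h
        have hgsub : ∀ u ∈ g, u ∈ S := fun u hu => (hchild_mem.mp (hg hu)).1
        have hD₁ne : D₁.Nonempty :=
          ⟨hgne.choose, Finset.mem_biUnion.mpr ⟨_, hgne.choose_spec, hDesc_self _⟩⟩
        have hD₁sub : D₁ ⊆ S := by
          intro x hx
          obtain ⟨u, hu, hxu⟩ := Finset.mem_biUnion.mp hx
          exact hDesc_sub u (hgsub u hu) hxu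
        have hcard₁ : ((A ∩ D₁).card : ℝ) = ∑ u ∈ g, (τ u : ℝ) := by
          rw [hE2 g hg]; push_cast; rfl
        have hD₁cl : ∀ x ∈ D₁, p x ∈ D₁ ∨ p x = v := by
          intro x hx
          obtain ⟨u, hu, hxu⟩ := Finset.mem_biUnion.mp hx
          rcases hDesc_cl u x hxu with h | h
          · exact Or.inl (Finset.mem_biUnion.mpr ⟨u, hu, h⟩)
          · rw [(hchild_mem.mp (hg hu)).2] at h
            exact Or.inr h
        set S' : Finset V := S \ D₁ with hS'def
        have hkey := key_split D₁ hD₁sub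
        have hWS' : c < ((A ∩ insert r S').card : ℝ) := by
          have hcast : ((A ∩ insert r S').card : ℝ) = (W : ℝ) - ((A ∩ D₁).card : ℝ) := by
            rw [hWdef, hkey]; push_cast; ring
          rw [hcast, hcard₁]; linarith
        have hS'ne : S'.Nonempty := by
          have h2 : 1 < (A ∩ insert r S').card := by
            by_contra hle
            push_neg at hle
            have : ((A ∩ insert r S').card : ℝ) ≤ 1 := by exact_mod_cast hle
            linarith
          obtain ⟨x, hx, hxr⟩ := Finset.exists_mem_ne h2 r
          have := (Finset.mem_inter.mp hx).2
          exact ⟨x, (Finset.mem_insert.mp this).resolve_left hxr⟩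
        have hS'r : r ∉ S' := fun h => hrS (Finset.mem_sdiff.mp h).1
        have hS'cl : ∀ u ∈ S', p u ∈ S' ∨ p u = r := by
          intro u hu
          obtain ⟨huS, huD⟩ := Finset.mem_sdiff.mp hu
          rcases hS u huS with h | h
          · refine Or.inl (Finset.mem_sdiff.mpr ⟨h, fun hpd => huD ?_⟩)
            obtain ⟨u', hu', hpu'⟩ := Finset.mem_biUnion.mp hpd
            exact Finset.mem_biUnion.mpr ⟨u', hu', hDesc_dc huS hpu'⟩
          · exact Or.inr h
        have hS'card : S'.card ≤ N := by
          have hss : S' ⊂ S := Finset.sdiff_ssubset hD₁sub hD₁ne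
          have := Finset.card_lt_card hss
          omega
        obtain ⟨P', hP'props, hP'cov, hP'disj⟩ := ih S' hS'card hS'ne hS'r hS'cl (le_of_lt hWS')
        refine ⟨(D₁, v) :: P', ?_, ?_, ?_⟩
        · rintro q hq
          rcases List.mem_cons.mp hq with rfl | hq'
          · refine ⟨hD₁ne, hD₁sub, hD₁cl, ?_, ?_⟩
            · have h1 := hins_lb v D₁
              have h2 : ((A ∩ D₁).card : ℝ) ≤ ((A ∩ insert v D₁).card : ℝ) := by
                exact_mod_cast h1
              rw [hcard₁] at h2
              linarith
            · have h1 := hins_ub v D₁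
              have h2 : ((A ∩ insert v D₁).card : ℝ) ≤ 1 + ((A ∩ D₁).card : ℝ) := by
                exact_mod_cast h1
              rw [hcard₁] at h2
              linarith
          · obtain ⟨ha, hb, hc', hd', he⟩ := hP'props q hq'
            exact ⟨ha, hb.trans (Finset.sdiff_subset), hc', hd', he⟩
        · intro u hu
          by_cases hx : u ∈ D₁
          · exact ⟨(D₁, v), List.mem_cons_self, hx⟩
          · obtain ⟨q, hq, hq2⟩ := hP'cov u (Finset.mem_sdiff.mpr ⟨hu, hx⟩)
            exact ⟨q, List.mem_cons_of_mem _ hq, hq2⟩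
        · refine List.pairwise_cons.mpr ⟨?_, hP'disj⟩
          intro q hq
          have hqsub := (hP'props q hq).2.1
          rw [Finset.disjoint_left]
          intro x hx hxq
          exact (Finset.mem_sdiff.mp (hqsub hxq)).2 hx

end Peel

lemma spans_connected_main {V : Type*} {p : V → V} {r t : V} {d : V → ℕ}
    (hpr : p r = r) (hd : ∀ v, v ≠ r → d (p v) < d v)
    (hexit' : ∀ (D : Set V), (∀ v ∈ D, p v ∈ D ∨ p v = t) → r ∉ D → D.Nonempty →
      ∃ v ∈ D, p v = t)
    (D : Set V) (hne : D.Nonempty) (hrD : r ∉ D)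
    (hcl : ∀ v ∈ D, p v ∈ D ∨ p v = t) :
    SpansConnected ((fun v => s(v, p v)) '' D) := by
  classical
  set s : Set (Sym2 V) := (fun v => s(v, p v)) '' D with hs
  set Wv : Set V := {v : V | ∃ e ∈ s, v ∈ e} with hWv
  have hvr : ∀ v ∈ D, v ≠ r := fun v hv h => hrD (h ▸ hv)
  have hvpv : ∀ v ∈ D, v ≠ p v := by
    intro v hv h
    have := hd v (hvr v hv)
    rw [← h] at this
    omega
  have hmemWv : ∀ v ∈ D, v ∈ Wv := by
    intro v hv
    exact ⟨s(v, p v), Set.mem_image_of_mem _ hv, Sym2.mem_mk_left _ _⟩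
  have hmemWv' : ∀ v ∈ D, p v ∈ Wv := by
    intro v hv
    exact ⟨s(v, p v), Set.mem_image_of_mem _ hv, Sym2.mem_mk_right _ _⟩
  obtain ⟨v₀, hv₀, hpv₀⟩ := hexit' D hcl hrD hne
  have ht : t ∈ Wv := hpv₀ ▸ hmemWv' v₀ hv₀
  have hadj : ∀ v (hv : v ∈ D), (SimpleGraph.induce Wv (SimpleGraph.fromEdgeSet s)).Adj
      ⟨v, hmemWv v hv⟩ ⟨p v, hmemWv' v hv⟩ := by
    intro v hv
    simp only [SimpleGraph.induce, comap_adj, Function.Embedding.coe_subtype,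
      fromEdgeSet_adj]
    exact ⟨Set.mem_image_of_mem _ hv, hvpv v hv⟩
  have hreach : ∀ n v (hv : v ∈ D), d v ≤ n →
      (SimpleGraph.induce Wv (SimpleGraph.fromEdgeSet s)).Reachable ⟨v, hmemWv v hv⟩ ⟨t, ht⟩ := by
    intro n
    induction n with
    | zero =>
      intro v hv hdv
      exact absurd (hd v (hvr v hv)) (by omega)
    | succ n ih =>
      intro v hv hdv
      rcases hcl v hv with h | h
      · have h1 : d (p v) ≤ n := by have := hd v (hvr v hv); omega
        have h2 := ih (p v) h h1
        have h3 : (⟨p v, hmemWv' v hv⟩ : Wv) = ⟨p v, hmemWv (p v) h⟩ := rfl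
        exact ((hadj v hv).reachable).trans (h3 ▸ h2)
      · have h3 : (⟨p v, hmemWv' v hv⟩ : Wv) = ⟨t, ht⟩ := by
          simp [h]
        exact h3 ▸ (hadj v hv).reachable
  have hall : ∀ x : Wv, (SimpleGraph.induce Wv (SimpleGraph.fromEdgeSet s)).Reachable x ⟨t, ht⟩ := by
    rintro ⟨x, hx⟩
    have hx2 := hx
    obtain ⟨e, he, hxe⟩ := hx2
    obtain ⟨v, hv, rfl⟩ := he
    rcases Sym2.mem_iff.mp hxe with rfl | rfl
    · exact hreach (d x) x hv le_rfl
    · rcases hcl v hv with h | h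
      · exact hreach (d (p v)) (p v) h le_rfl
      · have heq : (⟨p v, hx⟩ : Wv) = ⟨t, ht⟩ := Subtype.ext h
        rw [heq]
  have hnon : Nonempty ↑Wv := ⟨⟨t, ht⟩⟩
  exact ⟨fun x y => (hall x).trans (hall y).symm⟩

/-- In a connected locally finite graph, for any finite vertex set `A` with
`|A| ≥ 3^k` there are `m ≥ 3^(k-1) + 1` disjoint nonempty edge sets, each spanning a connected
subgraph, covering all vertices, whose incident-vertex sets each contain between `3^{-k}|A|`
(inclusive) and `3^{-k+1}|A|` (exclusive) vertices of `A`. -/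
theorem divide_and_conquer {V : Type*} (G : SimpleGraph V)
    (hconn : G.Connected) (hlf : ∀ v : V, (G.neighborSet v).Finite)
    (k : ℕ) (hk : 1 ≤ k) (A : Finset V) (hA : 3 ^ k ≤ A.card) :
    ∃ (m : ℕ) (Es : Fin m → Set (Sym2 V)),
      3 ^ (k - 1) + 1 ≤ m ∧
      (∀ i j, i ≠ j → Disjoint (Es i) (Es j)) ∧
      (∀ i, (Es i).Nonempty) ∧
      (∀ i, Es i ⊆ G.edgeSet) ∧
      (∀ i, SpansConnected (Es i)) ∧
      (∀ v : V, ∃ i, ∃ e ∈ Es i, v ∈ e) ∧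
      (∀ i, (A.card : ℝ) / 3 ^ k ≤ (((A : Set V) ∩ {v | ∃ e ∈ Es i, v ∈ e}).ncard : ℝ) ∧
        (((A : Set V) ∩ {v | ∃ e ∈ Es i, v ∈ e}).ncard : ℝ) < 3 * (A.card : ℝ) / 3 ^ k) := by
  classical
  have h3k : (3:ℕ) ≤ 3 ^ k := by
    calc (3:ℕ) = 3 ^ 1 := (pow_one 3).symm
    _ ≤ 3 ^ k := Nat.pow_le_pow_right (by norm_num) hk
  have hA3 : 3 ≤ A.card := le_trans h3k hA
  obtain ⟨r, hrA⟩ : A.Nonempty := Finset.card_pos.mp (by omega)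
  -- parent function decreasing the distance to r
  have hpar : ∀ v : V, v ≠ r → ∃ u, G.Adj v u ∧ G.dist r u < G.dist r v := by
    intro v hv
    obtain ⟨w, hw⟩ := (hconn v r).exists_walk_length_eq_dist
    cases w with
    | nil => exact absurd rfl hv
    | @cons _ u _ hadj q =>
      refine ⟨u, hadj, ?_⟩
      have h1 : G.dist u r ≤ q.length := SimpleGraph.dist_le q
      rw [SimpleGraph.Walk.length_cons] at hw
      rw [show G.dist r u = G.dist u r from SimpleGraph.dist_comm,
        show G.dist r v = G.dist v r from SimpleGraph.dist_comm]
      omega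
  set d : V → ℕ := fun v => G.dist r v with hddef
  set p : V → V := fun v => if h : v = r then r else (hpar v h).choose with hpdef
  have hpr : p r = r := by simp [hpdef]
  have hadjp : ∀ v, v ≠ r → G.Adj v (p v) := by
    intro v hv
    simp only [hpdef, dif_neg hv]
    exact (hpar v hv).choose_spec.1
  have hd : ∀ v, v ≠ r → d (p v) < d v := by
    intro v hv
    simp only [hpdef, dif_neg hv, hddef]
    exact (hpar v hv).choose_spec.2
  have h0 : d r = 0 := by simp [hddef]
  have hvne : ∀ v, v ≠ r → v ≠ p v := by
    intro v hv h
    have := hd v hv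
    rw [← h] at this
    omega
  have hreachall : ∀ v : V, ∃ n, p^[n] v = r := fun v => reaches_r hd v
  -- the finite core
  set C : Finset V :=
    A.biUnion (fun a => (Finset.range (Nat.find (hreachall a) + 1)).image (fun i => p^[i] a))
    with hCdef
  have hAC : A ⊆ C := by
    intro a ha
    refine Finset.mem_biUnion.mpr ⟨a, ha, Finset.mem_image.mpr ⟨0, ?_, rfl⟩⟩
    simp
  have hrC : r ∈ C := by
    refine Finset.mem_biUnion.mpr ⟨r, hrA, Finset.mem_image.mpr ⟨Nat.find (hreachall r), ?_, ?_⟩⟩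
    · simp
    · exact Nat.find_spec (hreachall r)
  have hCcl : ∀ x ∈ C, p x ∈ C := by
    intro x hx
    obtain ⟨a, ha, hx⟩ := Finset.mem_biUnion.mp hx
    obtain ⟨i, hi, rfl⟩ := Finset.mem_image.mp hx
    rw [Finset.mem_range] at hi
    by_cases hle : i < Nat.find (hreachall a)
    · refine Finset.mem_biUnion.mpr ⟨a, ha, Finset.mem_image.mpr ⟨i+1, ?_, ?_⟩⟩
      · rw [Finset.mem_range]; omega
      · rw [Function.iterate_succ_apply']
    · have : i = Nat.find (hreachall a) := by omega
      subst this
      rw [Nat.find_spec (hreachall a), hpr]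
      exact hrC
  set S₀ : Finset V := C.erase r with hS₀def
  have hS₀cl : ∀ v ∈ S₀, p v ∈ S₀ ∨ p v = r := by
    intro v hv
    have h1 := hCcl v (Finset.mem_of_mem_erase hv)
    by_cases h : p v = r
    · exact Or.inr h
    · exact Or.inl (Finset.mem_erase.mpr ⟨h, h1⟩)
  have hrS₀ : r ∉ S₀ := Finset.notMem_erase r C
  obtain ⟨a₀, ha₀A, ha₀r⟩ := Finset.exists_mem_ne (by omega : 1 < A.card) r
  have hS₀ne : S₀.Nonempty := ⟨a₀, Finset.mem_erase.mpr ⟨ha₀r, hAC ha₀A⟩⟩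
  have hCS₀ : insert r S₀ = C := Finset.insert_erase hrC
  set c : ℝ := (A.card : ℝ) / 3 ^ k with hcdef
  have h3kpos : (0:ℝ) < 3 ^ k := by positivity
  have hc1 : 1 ≤ c := by
    rw [hcdef, le_div_iff₀ h3kpos]
    have : ((3:ℝ))^k ≤ (A.card : ℝ) := by exact_mod_cast hA
    linarith
  have hW₀ : c ≤ ((A ∩ insert r S₀).card : ℝ) := by
    rw [hCS₀, Finset.inter_eq_left.mpr hAC]
    rw [hcdef, div_le_iff₀ h3kpos]
    have h1 : (1:ℝ) ≤ 3^k := by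
      have : ((3:ℕ):ℝ) ≤ ((3^k : ℕ) : ℝ) := by exact_mod_cast h3k
      push_cast at this
      linarith
    nlinarith [Finset.card_pos.mpr (⟨r, hrA⟩ : A.Nonempty), (by exact_mod_cast Nat.zero_le A.card : (0:ℝ) ≤ A.card)]
  obtain ⟨P, hPprops, hPcov, hPdisj⟩ :=
    peel hpr hd h0 A c hc1 S₀.card S₀ le_rfl hS₀ne hrS₀ hS₀cl hW₀
  set m := P.length with hmdef
  have hm0 : 0 < m := by
    obtain ⟨q, hq, -⟩ := hPcov a₀ (Finset.mem_erase.mpr ⟨ha₀r, hAC ha₀A⟩)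
    exact List.length_pos_iff.mpr (List.ne_nil_of_mem hq)
  set Q : Fin m → Finset V × V := fun i => P.get i with hQdef
  have hQmem : ∀ i, Q i ∈ P := fun i => by simpa [hQdef] using List.get_mem P i.1 i.2
  have hQprops := fun i => hPprops (Q i) (hQmem i)
  have hQdisj : ∀ i j, i ≠ j → ∀ x ∈ (Q i).1, x ∉ (Q j).1 := by
    intro i j hij x hxi hxj
    rcases Fin.lt_or_lt_of_ne hij with h | h
    · exact Finset.disjoint_left.mp (List.pairwise_iff_get.mp hPdisj i j h) hxi hxj
    · exact Finset.disjoint_left.mp (List.pairwise_iff_get.mp hPdisj j i h) hxj hxi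
  -- the vertex r is the parent of an element of some part
  have hxr : ∃ i, ∃ x ∈ (Q i).1, p x = r := by
    have hfind := Nat.find_spec (hreachall a₀)
    set n := Nat.find (hreachall a₀) with hndef
    have hn0 : n ≠ 0 := by
      intro h
      rw [h] at hfind
      exact ha₀r hfind
    set x := p^[n-1] a₀ with hxdef
    have hxC : x ∈ C := by
      refine Finset.mem_biUnion.mpr ⟨a₀, ha₀A, Finset.mem_image.mpr ⟨n-1, ?_, rfl⟩⟩
      rw [Finset.mem_range]; omega
    have hxnr : x ≠ r := by
      intro h
      exact absurd (Nat.find_min' (hreachall a₀) (h ▸ rfl : p^[n-1] a₀ = r)) (by omega)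
    have hpx : p x = r := by
      have h9 : p^[(n-1)+1] a₀ = p (p^[n-1] a₀) := Function.iterate_succ_apply' p (n-1) a₀
      rw [show (n-1)+1 = n by omega] at h9
      rw [hxdef, ← h9, hfind]
    obtain ⟨q, hq, hxq⟩ := hPcov x (Finset.mem_erase.mpr ⟨hxnr, hxC⟩)
    obtain ⟨i, hi⟩ := List.mem_iff_get.mp hq
    refine ⟨i, x, ?_, hpx⟩
    simp only [hQdef]
    rw [hi]
    exact hxq
  -- assignment of core vertices to parts
  set Vset : Fin m → Set V := fun i => ↑(Q i).1 ∪ p '' ↑(Q i).1 with hVsetdef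
  have hCassign : ∀ u ∈ C, ∃ i, u ∈ Vset i := by
    intro u hu
    by_cases hur : u = r
    · subst hur
      obtain ⟨i, x, hx, hpx⟩ := hxr
      exact ⟨i, Or.inr ⟨x, hx, hpx⟩⟩
    · obtain ⟨q, hq, huq⟩ := hPcov u (Finset.mem_erase.mpr ⟨hur, hu⟩)
      obtain ⟨i, hi⟩ := List.mem_iff_get.mp hq
      exact ⟨i, Or.inl (by simp only [hQdef]; rw [hi]; exact huq)⟩
  set g : V → Fin m := fun u => if h : ∃ i, u ∈ Vset i then h.choose else ⟨0, hm0⟩ with hgdef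
  have hgspec : ∀ u, u ∈ C → u ∈ Vset (g u) := by
    intro u hu
    have h : ∃ i, u ∈ Vset i := hCassign u hu
    simp only [hgdef, dif_pos h]
    exact h.choose_spec
  -- attach point
  have hCreach : ∀ v : V, ∃ n, p^[n] v ∈ C := by
    intro v
    obtain ⟨n, hn⟩ := hreachall v
    exact ⟨n, hn ▸ hrC⟩
  set att : V → V := fun v => p^[Nat.find (hCreach v)] v with hattdef
  have hattC : ∀ v, att v ∈ C := fun v => Nat.find_spec (hCreach v)
  have hatt_step : ∀ v, v ∉ C →
      (p v ∉ C ∧ att (p v) = att v) ∨ (p v ∈ C ∧ p v = att v) := by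
    intro v hv
    set n := Nat.find (hCreach v) with hndef
    have hn0 : n ≠ 0 := by
      intro h
      apply hv
      have := Nat.find_spec (hCreach v)
      rwa [← hndef, h] at this
    by_cases hpvC : p v ∈ C
    · right
      refine ⟨hpvC, ?_⟩
      have hle : n ≤ 1 := Nat.find_min' (hCreach v) (by simpa using hpvC)
      have : n = 1 := by omega
      rw [hattdef]
      simp only [← hndef, this]
      rfl
    · left
      refine ⟨hpvC, ?_⟩
      have hn' : Nat.find (hCreach (p v)) = n - 1 := by
        have hub : p^[n-1] (p v) ∈ C := by
          have h9 : p^[(n-1)+1] v = p^[n-1] (p v) := Function.iterate_succ_apply p (n-1) v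
          rw [show (n-1)+1 = n by omega] at h9
          rw [← h9]
          exact Nat.find_spec (hCreach v)
        have h1 : Nat.find (hCreach (p v)) ≤ n - 1 := Nat.find_min' _ hub
        rcases Nat.lt_or_ge (Nat.find (hCreach (p v))) (n-1) with h2 | h2
        · exfalso
          have h3 := Nat.find_spec (hCreach (p v))
          have h9 : p^[Nat.find (hCreach (p v)) + 1] v
              = p^[Nat.find (hCreach (p v))] (p v) :=
            Function.iterate_succ_apply p _ v
          rw [← h9] at h3
          exact absurd (Nat.find_min' (hCreach v) h3) (by omega)
        · omega
      rw [hattdef]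
      simp only [← hndef, hn']
      have h9 : p^[(n-1)+1] v = p^[n-1] (p v) := Function.iterate_succ_apply p (n-1) v
      rw [show (n-1)+1 = n by omega] at h9
      exact h9.symm
  set B : Fin m → Set V := fun i => {v | v ∉ C ∧ g (att v) = i} with hBdef
  set Dfull : Fin m → Set V := fun i => ↑(Q i).1 ∪ B i with hDfulldef
  have hDfull_ne_r : ∀ i, ∀ v ∈ Dfull i, v ≠ r := by
    intro i v hv
    rcases hv with hv | hv
    · intro h
      exact hrS₀ ((hQprops i).2.1 (by exact_mod_cast h ▸ hv))
    · intro h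
      exact hv.1 (h ▸ hrC)
  have hDfull_disj : ∀ i j, i ≠ j → ∀ x, x ∈ Dfull i → x ∉ Dfull j := by
    intro i j hij x hxi hxj
    rcases hxi with hxi | hxi <;> rcases hxj with hxj | hxj
    · exact hQdisj i j hij x hxi hxj
    · exact hxj.1 (Finset.mem_of_mem_erase ((hQprops i).2.1 hxi))
    · exact hxi.1 (Finset.mem_of_mem_erase ((hQprops j).2.1 hxj))
    · exact hij (hxi.2 ▸ hxj.2 ▸ rfl)
  -- closure of the full parts
  have hBstep : ∀ i, ∀ v ∈ B i, p v ∈ B i ∨ p v ∈ ↑(Q i).1 ∨ p v = (Q i).2 := by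
    intro i v hv
    obtain ⟨hvC, hvg⟩ := hv
    rcases hatt_step v hvC with ⟨h1, h2⟩ | ⟨h1, h2⟩
    · exact Or.inl ⟨h1, by rw [h2, hvg]⟩
    · right
      have hmem := hgspec (att v) (hattC v)
      rw [hvg] at hmem
      rcases hmem with hmem | ⟨x, hx, hpx⟩
      · exact Or.inl (h2 ▸ hmem)
      · rcases (hQprops i).2.2.1 x hx with h3 | h3
        · exact Or.inl (by rw [h2, ← hpx]; exact h3)
        · exact Or.inr (by rw [h2, ← hpx, h3])
  have hDfull_cl : ∀ i, ∀ v ∈ Dfull i, p v ∈ Dfull i ∨ p v = (Q i).2 := by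
    intro i v hv
    rcases hv with hv | hv
    · rcases (hQprops i).2.2.1 v hv with h | h
      · exact Or.inl (Or.inl h)
      · exact Or.inr h
    · rcases hBstep i v hv with h | h | h
      · exact Or.inl (Or.inr h)
      · exact Or.inl (Or.inl h)
      · exact Or.inr h
  have hDfull_r : ∀ i, r ∉ Dfull i := by
    intro i h
    exact hDfull_ne_r i r h rfl
  have hDfull_ne : ∀ i, (Dfull i).Nonempty := by
    intro i
    obtain ⟨x, hx⟩ := (hQprops i).1
    exact ⟨x, Or.inl hx⟩
  -- the edge sets
  set Es : Fin m → Set (Sym2 V) := fun i => (fun v => s(v, p v)) '' Dfull i with hEsdef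
  have hinj : ∀ v w, v ≠ r → w ≠ r → s(v, p v) = s(w, p w) → v = w := by
    intro v w hv hw h
    rcases Sym2.eq_iff.mp h with ⟨h1, h2⟩ | ⟨h1, h2⟩
    · exact h1
    · exfalso
      have d1 := hd v hv
      have d2 := hd w hw
      rw [h2] at d1
      rw [← h1] at d2
      omega
  -- vertex sets of the parts
  have hVertEq : ∀ i, {v | ∃ e ∈ Es i, v ∈ e} = Dfull i ∪ p '' Dfull i := by
    intro i
    ext x
    simp only [Set.mem_setOf_eq, hEsdef, Set.mem_image, Set.mem_union]
    constructor
    · rintro ⟨e, ⟨v, hv, rfl⟩, hxe⟩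
      rcases Sym2.mem_iff.mp hxe with rfl | rfl
      · exact Or.inl hv
      · exact Or.inr ⟨v, hv, rfl⟩
    · rintro (hx | ⟨v, hv, rfl⟩)
      · exact ⟨s(x, p x), ⟨x, hx, rfl⟩, Sym2.mem_mk_left _ _⟩
      · exact ⟨s(v, p v), ⟨v, hv, rfl⟩, Sym2.mem_mk_right _ _⟩
  have hexit' : ∀ i, ∃ v ∈ (Q i).1, p v = (Q i).2 := by
    intro i
    have := exit_lemma hd (D := (↑(Q i).1 : Set V)) (t := (Q i).2) ?_ ?_ ?_
    · obtain ⟨v, hv, hpv⟩ := this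
      exact ⟨v, by exact_mod_cast hv, hpv⟩
    · intro v hv
      rcases (hQprops i).2.2.1 v (by exact_mod_cast hv) with h | h
      · exact Or.inl (by exact_mod_cast h)
      · exact Or.inr h
    · intro h
      exact hrS₀ ((hQprops i).2.1 (by exact_mod_cast h))
    · obtain ⟨x, hx⟩ := (hQprops i).1
      exact ⟨x, by exact_mod_cast hx⟩
  -- A-vertices in each part
  have hAint : ∀ i, (A : Set V) ∩ {v | ∃ e ∈ Es i, v ∈ e} =
      ↑(A ∩ insert (Q i).2 (Q i).1) := by
    intro i
    rw [hVertEq i]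
    ext x
    simp only [Set.mem_inter_iff, Finset.coe_inter, Finset.mem_coe, Finset.coe_insert,
      Set.mem_union, Set.mem_image, Finset.mem_insert, Finset.mem_coe, Set.mem_insert_iff]
    constructor
    · rintro ⟨hxA, hx⟩
      refine ⟨hxA, ?_⟩
      have hxC : x ∈ C := hAC hxA
      rcases hx with (hx | hx) | ⟨v, hv, rfl⟩
      · exact Or.inr hx
      · exact absurd hxC hx.1
      · rcases hv with hv | hv
        · rcases (hQprops i).2.2.1 v hv with h | h
          · exact Or.inr h
          · exact Or.inl h
        · rcases hBstep i v hv with h | h | h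
          · exact absurd hxC h.1
          · exact Or.inr h
          · exact Or.inl h
    · rintro ⟨hxA, hx | hx⟩
      · refine ⟨hxA, ?_⟩
        obtain ⟨v, hv, hpv⟩ := hexit' i
        exact Or.inr ⟨v, Or.inl hv, by rw [hpv, hx]⟩
      · exact ⟨hxA, Or.inl (Or.inl hx)⟩
  -- the counting bound on m
  have hAsub : A ⊆ Finset.univ.biUnion (fun i : Fin m => A ∩ insert (Q i).2 (Q i).1) := by
    intro a ha
    by_cases har : a = r
    · subst har
      obtain ⟨i, x, hx, hpx⟩ := hxr
      refine Finset.mem_biUnion.mpr ⟨i, Finset.mem_univ i, Finset.mem_inter.mpr ⟨ha, ?_⟩⟩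
      rcases (hQprops i).2.2.1 x hx with h | h
      · exfalso
        rw [hpx] at h
        exact hrS₀ ((hQprops i).2.1 h)
      · exact Finset.mem_insert.mpr (Or.inl (by rw [← h, hpx]))
    · obtain ⟨q, hq, haq⟩ := hPcov a (Finset.mem_erase.mpr ⟨har, hAC ha⟩)
      obtain ⟨i, hi⟩ := List.mem_iff_get.mp hq
      refine Finset.mem_biUnion.mpr ⟨i, Finset.mem_univ i, Finset.mem_inter.mpr ⟨ha, ?_⟩⟩
      exact Finset.mem_insert.mpr (Or.inr (by simp only [hQdef]; rw [hi]; exact haq))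
  have hsumlb : (A.card : ℝ) ≤ ∑ i : Fin m, ((A ∩ insert (Q i).2 (Q i).1).card : ℝ) := by
    have h1 : A.card ≤ ∑ i : Fin m, (A ∩ insert (Q i).2 (Q i).1).card :=
      le_trans (Finset.card_le_card hAsub) Finset.card_biUnion_le
    exact_mod_cast h1
  have hsumub : ∑ i : Fin m, ((A ∩ insert (Q i).2 (Q i).1).card : ℝ) < m * (3 * c) := by
    have h1 : ∀ i ∈ (Finset.univ : Finset (Fin m)),
        ((A ∩ insert (Q i).2 (Q i).1).card : ℝ) < 3 * c :=
      fun i _ => (hQprops i).2.2.2.2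
    calc ∑ i : Fin m, ((A ∩ insert (Q i).2 (Q i).1).card : ℝ)
        < ∑ i : Fin m, (3 * c) := Finset.sum_lt_sum_of_nonempty
          (Finset.univ_nonempty_iff.mpr ⟨⟨0, hm0⟩⟩) h1
    _ = m * (3 * c) := by
        rw [Finset.sum_const, Finset.card_univ, Fintype.card_fin, nsmul_eq_mul]
  have hmbound : 3 ^ (k - 1) + 1 ≤ m := by
    have hApos : (0:ℝ) < A.card := by exact_mod_cast Finset.card_pos.mpr ⟨r, hrA⟩
    have h2 : (A.card : ℝ) < m * (3 * c) := lt_of_le_of_lt hsumlb hsumub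
    rw [hcdef] at h2
    have h3 : ((3:ℝ)) ^ k < 3 * m := by
      have hmpos : (0:ℝ) < m := by exact_mod_cast hm0
      rw [div_eq_mul_inv] at h2
      have h4 : (A.card:ℝ) * (3:ℝ)^k < m * 3 * (A.card:ℝ) := by
        have := mul_lt_mul_of_pos_right h2 h3kpos
        field_simp at this
        nlinarith [this]
      nlinarith [hApos]
    have h5 : ((3:ℝ)) ^ (k-1) < m := by
      have hkk : k = (k-1) + 1 := by omega
      rw [hkk, pow_succ] at h3
      nlinarith [pow_pos (by norm_num : (0:ℝ) < 3) (k-1)]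
    have h6 : (3:ℕ) ^ (k-1) < m := by exact_mod_cast h5
    omega
  refine ⟨m, Es, hmbound, ?_, ?_, ?_, ?_, ?_, ?_⟩
  · -- disjointness
    intro i j hij
    rw [Set.disjoint_left]
    rintro e ⟨v, hv, rfl⟩ ⟨w, hw, he⟩
    have := hinj w v (hDfull_ne_r j w hw) (hDfull_ne_r i v hv) he
    subst this
    exact hDfull_disj i j hij w hv hw
  · -- nonempty
    intro i
    obtain ⟨x, hx⟩ := hDfull_ne i
    exact ⟨s(x, p x), Set.mem_image_of_mem _ hx⟩
  · -- subset of edge set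
    intro i
    rintro e ⟨v, hv, rfl⟩
    rw [SimpleGraph.mem_edgeSet]
    exact hadjp v (hDfull_ne_r i v hv)
  · -- spans connected
    intro i
    exact spans_connected_main hpr hd
      (fun D hcl hr hne => exit_lemma hd hcl hr hne)
      (Dfull i) (hDfull_ne i) (hDfull_r i) (hDfull_cl i)
  · -- covering
    intro v
    by_cases hvC : v ∈ C
    · by_cases hvr : v = r
      · subst hvr
        obtain ⟨i, x, hx, hpx⟩ := hxr
        exact ⟨i, s(x, p x), ⟨x, Or.inl hx, rfl⟩, by rw [hpx]; exact Sym2.mem_mk_right _ _⟩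
      · obtain ⟨q, hq, hvq⟩ := hPcov v (Finset.mem_erase.mpr ⟨hvr, hvC⟩)
        obtain ⟨i, hi⟩ := List.mem_iff_get.mp hq
        refine ⟨i, s(v, p v), ⟨v, Or.inl ?_, rfl⟩, Sym2.mem_mk_left _ _⟩
        simp only [hQdef]; rw [hi]; exact hvq
    · refine ⟨g (att v), s(v, p v), ⟨v, Or.inr ⟨hvC, rfl⟩, rfl⟩, Sym2.mem_mk_left _ _⟩
  · -- weights
    intro i
    rw [hAint i, Set.ncard_coe_finset]
    constructor
    · exact (hQprops i).2.2.2.1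
    · have := (hQprops i).2.2.2.2
      rw [hcdef] at this
      calc ((A ∩ insert (Q i).2 (Q i).1).card : ℝ) < 3 * ((A.card : ℝ) / 3^k) := this
      _ = 3 * (A.card : ℝ) / 3 ^ k := by ring
end

section
/- Let p : [1, ∞) → [0, 1] be nonincreasing with p(λ · 3^k) ≤ p(λ)^{3^{k-1}} for all λ ≥ 1 and integers k ≥ 1, and let M ≥ 9 be such that p(M − 1) ≥ e^{−1}. Then for every 0 < ε ≤ 1 with ε M ≥ 1 and 9ε ≤ 1, one has 1 − p(ε M) ≤ 27 ε. -/
lemma exists_k_aux (ε : ℝ) (hε : 0 < ε) (h9 : 9 * ε ≤ 1) :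
    ∃ K : ℕ, 1 ≤ K ∧ (3:ℝ) ^ K * ε ≤ 1/3 ∧ 1 ≤ 27 * ε * 3 ^ (K - 1) := by
  have hex : ∃ n : ℕ, 1/(9*ε) ≤ (3:ℝ) ^ n := by
    obtain ⟨n, hn⟩ := pow_unbounded_of_one_lt (1/(9*ε)) (by norm_num : (1:ℝ) < 3)
    exact ⟨n, hn.le⟩
  classical
  set n₀ := Nat.find hex with hn₀
  have hfind : 1/(9*ε) ≤ (3:ℝ) ^ n₀ := Nat.find_spec hex
  rcases Nat.eq_zero_or_pos n₀ with h0 | hpos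
  · -- then 1/(9ε) ≤ 1, i.e. 1/9 ≤ ε
    rw [h0] at hfind
    simp only [pow_zero] at hfind
    have h9ε : (1:ℝ) ≤ 9 * ε := by
      rw [div_le_one (by positivity)] at hfind
      linarith
    refine ⟨1, le_refl 1, ?_, ?_⟩
    · simp only [pow_one]; linarith
    · norm_num; linarith
  · obtain ⟨m, hm⟩ : ∃ m, n₀ = m + 1 := ⟨n₀ - 1, (Nat.succ_pred_eq_of_pos hpos).symm⟩
    have hmin : ¬ (1/(9*ε) ≤ (3:ℝ) ^ m) := Nat.find_min hex (by omega)
    push_neg at hmin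
    refine ⟨n₀, hpos, ?_, ?_⟩
    · -- 3^n₀ = 3 * 3^m < 3/(9ε) = 1/(3ε)
      have : (3:ℝ) ^ n₀ < 3 * (1/(9*ε)) := by
        rw [hm, pow_succ]; nlinarith [pow_pos (by norm_num : (0:ℝ) < 3) m]
      have h2 := mul_lt_mul_of_pos_right this hε
      have h3 : 3 * (1/(9*ε)) * ε = 1/3 := by field_simp; ring
      linarith
    · have hn₀m : n₀ - 1 = m := by omega
      rw [hn₀m]
      have h1 : 1 ≤ 9 * ε * (3:ℝ) ^ n₀ := by
        have := mul_le_mul_of_nonneg_right hfind (le_of_lt (by positivity : (0:ℝ) < 9*ε))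
        rw [div_mul_cancel₀] at this
        · linarith [mul_comm ((3:ℝ)^n₀) (9*ε)]
        · positivity
      rw [hm, pow_succ] at h1
      nlinarith [pow_pos (by norm_num : (0:ℝ) < 3) m]

/-- If `p : [1,∞) → [0,1]` is nonincreasing with
`p(λ 3^k) ≤ p(λ)^{3^{k-1}}` for all `λ ≥ 1` and integers `k ≥ 1`, and `M ≥ 9` satisfies
`p(M-1) ≥ e^{-1}`, then `1 - p(εM) ≤ 27ε` whenever `0 < ε ≤ 1`, `εM ≥ 1`, `9ε ≤ 1`. -/
theorem tail_bootstrap_lower (p : ℝ → ℝ)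
    (hmono : AntitoneOn p (Set.Ici 1))
    (hrange : ∀ x : ℝ, 1 ≤ x → p x ∈ Set.Icc (0 : ℝ) 1)
    (hsub : ∀ lam : ℝ, 1 ≤ lam → ∀ k : ℕ, 1 ≤ k →
      p (lam * 3 ^ k) ≤ p lam ^ (3 ^ (k - 1) : ℕ))
    (M : ℝ) (hM : 9 ≤ M) (hpM : Real.exp (-1) ≤ p (M - 1)) :
    ∀ ε : ℝ, 0 < ε → ε ≤ 1 → 1 ≤ ε * M → 9 * ε ≤ 1 → 1 - p (ε * M) ≤ 27 * ε := by
  intro ε hε hε1 hεM h9ε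
  obtain ⟨K, hK1, hKup, hKlo⟩ := exists_k_aux ε hε h9ε
  set x := ε * M with hx
  have hx1 : 1 ≤ x := hεM
  have hMpos : (0:ℝ) < M := by linarith
  -- x * 3^K ≤ M - 1
  have h3Kpos : (0:ℝ) < 3 ^ K := by positivity
  have hle : x * 3 ^ K ≤ M - 1 := by
    have : x * 3 ^ K = (3 ^ K * ε) * M := by ring
    rw [this]
    have := mul_le_mul_of_nonneg_right hKup hMpos.le
    nlinarith
  have hmem1 : x * 3 ^ K ∈ Set.Ici (1:ℝ) := by
    have : (1:ℝ) ≤ 3 ^ K := one_le_pow₀ (by norm_num : (1:ℝ) ≤ 3)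
    simp only [Set.mem_Ici]; nlinarith
  have hmem2 : M - 1 ∈ Set.Ici (1:ℝ) := by simp only [Set.mem_Ici]; linarith
  have hmono' : p (M - 1) ≤ p (x * 3 ^ K) := hmono hmem1 hmem2 hle
  have hsub' : p (x * 3 ^ K) ≤ p x ^ (3 ^ (K - 1) : ℕ) := hsub x hx1 K hK1
  set N : ℕ := 3 ^ (K - 1) with hN
  have hNpos : 0 < N := Nat.pow_pos (by norm_num)
  have hexp : Real.exp (-1) ≤ p x ^ N := le_trans (le_trans hpM hmono') hsub'
  have hpx0 : 0 ≤ p x := (hrange x hx1).1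
  -- exp(-(1/N)) ≤ p x
  have hNR : (0:ℝ) < (N:ℝ) := by exact_mod_cast hNpos
  have hkey : Real.exp (-(1/(N:ℝ))) ≤ p x := by
    have hpow : (Real.exp (-(1/(N:ℝ)))) ^ N = Real.exp (-1) := by
      rw [← Real.exp_nat_mul]
      congr 1
      field_simp
    have : (Real.exp (-(1/(N:ℝ)))) ^ N ≤ p x ^ N := by rw [hpow]; exact hexp
    exact le_of_pow_le_pow_left₀ hNpos.ne' hpx0 this
  have hlin : 1 - Real.exp (-(1/(N:ℝ))) ≤ 1/(N:ℝ) := by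
    have := Real.add_one_le_exp (-(1/(N:ℝ)))
    linarith
  have hNcast : ((N:ℕ):ℝ) = (3:ℝ) ^ (K - 1) := by
    rw [hN]; push_cast; ring
  have hfin : 1/(N:ℝ) ≤ 27 * ε := by
    rw [div_le_iff₀ hNR, hNcast]
    linarith [hKlo]
  linarith
end
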